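/- Let ω ∈ R^d be Diophantine of class τ with constant ν(ω;τ), let N ≥ 1 be an integer, A > 0, and assume 2τ > d. Then there exist constants C > 0 (depending on τ, d, A and ν(ω;τ)) and ρ_0 > 0 such that for every 0 < ρ < ρ_0 the two-dimensional Lebesgue measure of the set {λ ∈ C : ρ < |λ − 1| < 2ρ and ν(λ;ω,τ) |λ − 1|^{N+1} > A} is at most C A^{-2} ρ^{2(N+1) + (2τ − d)/τ}. In particular, the measure of the complement of Λ(A;ω,τ,N) in the annulus ρ < |λ−1| < 2ρ is much smaller than the area of the annulus as ρ → 0. -/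

import Mathlib

open scoped Real ENNReal
open Matrix MeasureTheory Filter Asymptotics

noncomputable section

namespace KAM

/-! ### Diophantine constants -/

/-- `|k| = ∑ |k_j|` for an integer frequency vector. -/
def intNorm {d : ℕ} (k : Fin d → ℤ) : ℝ := ∑ j, |(k j : ℝ)|

/-- `k · ω`. -/
def intDot {d : ℕ} (k : Fin d → ℤ) (ω : Fin d → ℝ) : ℝ := ∑ j, (k j : ℝ) * ω j

/-- `e^{2 π i k·ω}`. -/
def eDot {d : ℕ} (k : Fin d → ℤ) (ω : Fin d → ℝ) : ℂ :=
  Complex.exp (2 * Real.pi * Complex.I * (intDot k ω : ℂ))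

/-- The Diophantine constant `ν(λ; ω, τ) ∈ [0,∞]` of a complex number `λ`
with respect to `ω`, `ν(λ; ω, τ) = sup_{k ≠ 0} |e^{2πik·ω} − λ|⁻¹ |k|^{-τ}`. -/
def nuC {d : ℕ} (ω : Fin d → ℝ) (τ : ℝ) (lam : ℂ) : ℝ≥0∞ :=
  ⨆ k : {k : Fin d → ℤ // k ≠ 0},
    (ENNReal.ofReal ‖eDot k.1 ω - lam‖)⁻¹ * ENNReal.ofReal (intNorm k.1) ^ (-τ)

/-- The Diophantine constant `ν(ω; τ)` of the frequency `ω`. -/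
def nuOmega {d : ℕ} (ω : Fin d → ℝ) (τ : ℝ) : ℝ≥0∞ := nuC ω τ 1

/-- `ω` is Diophantine of class `τ` (i.e. `ν(ω;τ) < ∞`). -/
def IsDiophantine {d : ℕ} (ω : Fin d → ℝ) (τ : ℝ) : Prop := nuOmega ω τ ≠ ∞

/-! ### Strips, analytic function spaces on the complexified torus -/

/-- The closed strip `T^d_ρ` (as a subset of `ℂ^d`; functions on the torus are
represented by their `ℤ^d`-periodic lifts). -/
def Strip (d : ℕ) (ρ : ℝ) : Set (Fin d → ℂ) := {z | ∀ j, |(z j).im| ≤ ρ}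

/-- The open strip (interior of `T^d_ρ`). -/
def StripO (d : ℕ) (ρ : ℝ) : Set (Fin d → ℂ) := {z | ∀ j, |(z j).im| < ρ}

/-- Sup norm `‖·‖_ρ` over the strip `T^d_ρ`. -/
def stripNorm {d : ℕ} {E : Type*} [NormedAddCommGroup E] (ρ : ℝ)
    (f : (Fin d → ℂ) → E) : ℝ :=
  ⨆ z : Strip d ρ, ‖f z.1‖

/-- `ℤ^d`-periodicity (functions on the torus). -/
def ZPeriodic {d : ℕ} {E : Type*} (f : (Fin d → ℂ) → E) : Prop :=
  ∀ (z : Fin d → ℂ) (k : Fin d → ℤ), f (z + fun j => (k j : ℂ)) = f z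

/-- Membership in `A_ρ`: analytic in the interior of the strip `T^d_ρ`,
continuous and bounded on the closed strip. -/
structure MemA {d : ℕ} {E : Type*} [NormedAddCommGroup E] [NormedSpace ℂ E]
    (ρ : ℝ) (f : (Fin d → ℂ) → E) : Prop where
  analyticOn : AnalyticOn ℂ f (StripO d ρ)
  continuousOn : ContinuousOn f (Strip d ρ)
  bounded : ∃ M : ℝ, ∀ z ∈ Strip d ρ, ‖f z‖ ≤ M

/-- The translation `T_ω : θ ↦ θ + ω`. -/
def shift {d : ℕ} (ω : Fin d → ℝ) (z : Fin d → ℂ) : Fin d → ℂ :=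
  z + fun j => (ω j : ℂ)

/-- Average over the torus `T^d` of a function on the complexified torus. -/
def torusAvg {d : ℕ} {E : Type*} [NormedAddCommGroup E] [NormedSpace ℝ E]
    (f : (Fin d → ℂ) → E) : E :=
  ∫ θ in Set.Icc (0 : Fin d → ℝ) 1, f (fun j => (θ j : ℂ))

/-- Entrywise average over `T^d` of a matrix-valued function. -/
def matAvg {d m n : ℕ} (F : (Fin d → ℂ) → Matrix (Fin m) (Fin n) ℂ) :
    Matrix (Fin m) (Fin n) ℂ :=
  Matrix.of fun i j => torusAvg fun θ => F θ i j

/-- The lift of an integer vector `k ∈ ℤ^d` to the phase space `ℂ^{2d} = ℂ^d × ℂ^d`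
(`k` in the angle components, `0` in the action components). -/
def liftZ {d : ℕ} (k : Fin d → ℤ) : Fin (d + d) → ℂ :=
  Fin.addCases (motive := fun _ => ℂ) (fun j => (k j : ℂ)) fun _ => 0

/-- Quasi-periodicity of an embedding `K : T^d → M = T^d × B` (written in the
universal cover). -/
def QuasiPeriodic {d : ℕ} (K : (Fin d → ℂ) → Fin (d + d) → ℂ) : Prop :=
  ∀ (z : Fin d → ℂ) (k : Fin d → ℤ), K (z + fun j => (k j : ℂ)) = K z + liftZ k

/-- Periodicity of a map of the phase space `M = T^d × B` (written in the
universal cover). -/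
def PhasePeriodic {d : ℕ} (f : (Fin (d + d) → ℂ) → Fin (d + d) → ℂ) : Prop :=
  ∀ (x : Fin (d + d) → ℂ) (k : Fin d → ℤ), f (x + liftZ k) = f x + liftZ k

/-! ### Jacobians as matrices -/

/-- `A` is the Jacobian matrix of `f` at `z`. -/
def hasJacobianAt {m n : ℕ} (f : (Fin n → ℂ) → Fin m → ℂ)
    (A : Matrix (Fin m) (Fin n) ℂ) (z : Fin n → ℂ) : Prop :=
  HasFDerivAt f (LinearMap.toContinuousLinearMap (Matrix.mulVecLin A)) z

/-- Real version: `A` is the Jacobian matrix of `f` at `z`. -/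
def hasJacobianAtR {m n : ℕ} (f : (Fin n → ℝ) → Fin m → ℝ)
    (A : Matrix (Fin m) (Fin n) ℝ) (z : Fin n → ℝ) : Prop :=
  HasFDerivAt f (LinearMap.toContinuousLinearMap (Matrix.mulVecLin A)) z

/-! ### Adapted frames -/

/-- The normalization matrix `N = (DK^⊤ DK)⁻¹`. -/
def nMat {d : ℕ} {R : Type*} [CommRing R] (DK : Matrix (Fin (d + d)) (Fin d) R) :
    Matrix (Fin d) (Fin d) R := (DKᵀ * DK)⁻¹

/-- The adapted frame `M = [DK | J⁻¹ DK N]`, where `Jx` is the value of the matrix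
representing the symplectic form at the relevant point. -/
def frameM {d : ℕ} {R : Type*} [CommRing R] (Jx : Matrix (Fin (d + d)) (Fin (d + d)) R)
    (DK : Matrix (Fin (d + d)) (Fin d) R) : Matrix (Fin (d + d)) (Fin (d + d)) R :=
  Matrix.reindex (Equiv.refl _) finSumFinEquiv
    (Matrix.fromCols DK (Jx⁻¹ * DK * nMat DK))

/-- First `d` rows of a `2d × n` matrix. -/
def rowsFst {d n : ℕ} {R : Type*} (A : Matrix (Fin (d + d)) (Fin n) R) :
    Matrix (Fin d) (Fin n) R := A.submatrix (Fin.castAdd d) id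

/-- Last `d` rows of a `2d × n` matrix. -/
def rowsSnd {d n : ℕ} {R : Type*} (A : Matrix (Fin (d + d)) (Fin n) R) :
    Matrix (Fin d) (Fin n) R := A.submatrix (Fin.natAdd d) id

/-- Entrywise sup norm of a matrix. -/
def matNorm {m n : Type*} {α : Type*} [SeminormedAddCommGroup α] (A : Matrix m n α) : ℝ :=
  ⨆ i, ⨆ j, ‖A i j‖

/-- Sup over the strip `T^d_ρ` of the entrywise norm of a matrix-valued function. -/
def matStripNorm {d m n : ℕ} (ρ : ℝ) (F : (Fin d → ℂ) → Matrix (Fin m) (Fin n) ℂ) : ℝ :=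
  ⨆ z : Strip d ρ, matNorm (F z.1)

/-- The matrix `S(θ)` appearing in the automatic reducibility:
`S(θ) = N(θ+ω)^⊤ DK(θ+ω)^⊤ (Df∘K)(θ) (J⁻¹∘K)(θ) DK(θ) N(θ)
  − λ N(θ+ω)^⊤ DK(θ+ω)^⊤ (J⁻¹∘K)(θ+ω) DK(θ+ω) N(θ+ω)`. -/
def SmatC {d : ℕ} (lam : ℂ) (ω : Fin d → ℝ)
    (J : (Fin (d + d) → ℂ) → Matrix (Fin (d + d)) (Fin (d + d)) ℂ)
    (K : (Fin d → ℂ) → Fin (d + d) → ℂ)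
    (DK : (Fin d → ℂ) → Matrix (Fin (d + d)) (Fin d) ℂ)
    (DfK : (Fin d → ℂ) → Matrix (Fin (d + d)) (Fin (d + d)) ℂ)
    (θ : Fin d → ℂ) : Matrix (Fin d) (Fin d) ℂ :=
  (nMat (DK (shift ω θ)))ᵀ * (DK (shift ω θ))ᵀ * DfK θ * (J (K θ))⁻¹ * DK θ * nMat (DK θ)
    - lam • ((nMat (DK (shift ω θ)))ᵀ * (DK (shift ω θ))ᵀ * (J (K (shift ω θ)))⁻¹ *
        DK (shift ω θ) * nMat (DK (shift ω θ)))

/-- The matrix `Ã(θ) = (M ∘ T_ω)(θ)⁻¹ (D_μ f ∘ K)(θ)`. -/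
def AtildeC {d : ℕ} (ω : Fin d → ℝ)
    (J : (Fin (d + d) → ℂ) → Matrix (Fin (d + d)) (Fin (d + d)) ℂ)
    (K : (Fin d → ℂ) → Fin (d + d) → ℂ)
    (DK : (Fin d → ℂ) → Matrix (Fin (d + d)) (Fin d) ℂ)
    (DmufK : (Fin d → ℂ) → Matrix (Fin (d + d)) (Fin d) ℂ)
    (θ : Fin d → ℂ) : Matrix (Fin (d + d)) (Fin d) ℂ :=
  (frameM (J (K (shift ω θ))) (DK (shift ω θ)))⁻¹ * DmufK θ

/-- The non-degeneracy condition: there exists a zero-average solution `B_b` of the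
cohomology equation `λ B_b − B_b ∘ T_ω = −(Ã₂)⁰` such that the `2d × 2d` matrix
`[[avg S, avg (S B_b⁰) + avg Ã₁],[(λ−1) Id, avg Ã₂]]` has nonzero determinant. -/
def HNDat {d : ℕ} (lam : ℂ) (ω : Fin d → ℝ)
    (S A1 A2 : (Fin d → ℂ) → Matrix (Fin d) (Fin d) ℂ) : Prop :=
  ∃ Bb : (Fin d → ℂ) → Matrix (Fin d) (Fin d) ℂ,
    matAvg Bb = 0 ∧
    (∀ θ : Fin d → ℝ,
      lam • Bb (fun j => (θ j : ℂ)) - Bb (shift ω fun j => (θ j : ℂ))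
        = -(A2 (fun j => (θ j : ℂ)) - matAvg A2)) ∧
    (Matrix.fromBlocks (matAvg S) (matAvg (fun θ => S θ * Bb θ) + matAvg A1)
      ((lam - 1) • (1 : Matrix (Fin d) (Fin d) ℂ)) (matAvg A2)).det ≠ 0

/-- The non-degeneracy condition together with the bound `T` on the norm of the
inverse of the non-degeneracy matrix (the twist constant). -/
def H3twist {d : ℕ} (lam : ℂ) (ω : Fin d → ℝ) (TT : ℝ)
    (S A1 A2 : (Fin d → ℂ) → Matrix (Fin d) (Fin d) ℂ) : Prop :=
  ∃ Bb : (Fin d → ℂ) → Matrix (Fin d) (Fin d) ℂ,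
    matAvg Bb = 0 ∧
    (∀ θ : Fin d → ℝ,
      lam • Bb (fun j => (θ j : ℂ)) - Bb (shift ω fun j => (θ j : ℂ))
        = -(A2 (fun j => (θ j : ℂ)) - matAvg A2)) ∧
    (Matrix.fromBlocks (matAvg S) (matAvg (fun θ => S θ * Bb θ) + matAvg A1)
      ((lam - 1) • (1 : Matrix (Fin d) (Fin d) ℂ)) (matAvg A2)).det ≠ 0 ∧
    matNorm (Matrix.fromBlocks (matAvg S) (matAvg (fun θ => S θ * Bb θ) + matAvg A1)
      ((lam - 1) • (1 : Matrix (Fin d) (Fin d) ℂ)) (matAvg A2))⁻¹ ≤ TT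

/-- The normalization condition for `K` with respect to the reference embedding `K0`:
`∫_{T^d} [M(θ)⁻¹ (K(θ) − K0(θ))]₁ dθ = 0`. -/
def NormalizedWrt {d : ℕ}
    (J : (Fin (d + d) → ℂ) → Matrix (Fin (d + d)) (Fin (d + d)) ℂ)
    (K0 : (Fin d → ℂ) → Fin (d + d) → ℂ)
    (DK0 : (Fin d → ℂ) → Matrix (Fin (d + d)) (Fin d) ℂ)
    (K : (Fin d → ℂ) → Fin (d + d) → ℂ) : Prop :=
  ∀ i : Fin d,
    torusAvg (fun θ =>
      ((frameM (J (K0 θ)) (DK0 θ))⁻¹.mulVec (K θ - K0 θ)) (Fin.castAdd d i)) = 0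

/-! ### Symplectic structure and conformally symplectic families -/

/-- `J` represents an exact analytic symplectic form on `M = T^d × B`. -/
structure SympForm {d : ℕ}
    (J : (Fin (d + d) → ℂ) → Matrix (Fin (d + d)) (Fin (d + d)) ℂ) : Prop where
  antisymm : ∀ x, (J x)ᵀ = -J x
  nondeg : ∀ x, IsUnit (J x).det
  analytic : ∀ i j, AnalyticOnNhd ℂ (fun x => J x i j) Set.univ
  periodic : ∀ (x : Fin (d + d) → ℂ) (k : Fin d → ℤ), J (x + liftZ k) = J x
  exact' : ∃ (a : (Fin (d + d) → ℂ) → Fin (d + d) → ℂ)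
      (Da : (Fin (d + d) → ℂ) → Matrix (Fin (d + d)) (Fin (d + d)) ℂ),
      (∀ x, hasJacobianAt a (Da x) x) ∧ ∀ x, J x = (Da x)ᵀ - Da x

/-- The data of an analytic family `f_{μ,ε}` of maps of `M = T^d × B`, together with
its Jacobian `Df` in the phase-space variable, its derivative `Dμf` with respect to
the drift parameter `μ`, and the conformal factor `λ(ε)`. -/
structure ConfFamily (d : ℕ) where
  f : (Fin d → ℂ) → ℂ → (Fin (d + d) → ℂ) → Fin (d + d) → ℂ
  Df : (Fin d → ℂ) → ℂ → (Fin (d + d) → ℂ) → Matrix (Fin (d + d)) (Fin (d + d)) ℂ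
  Dmuf : (Fin d → ℂ) → ℂ → (Fin (d + d) → ℂ) → Matrix (Fin (d + d)) (Fin d) ℂ
  lam : ℂ → ℂ

/-- `F` is an analytic family of conformally symplectic maps (`f_{μ,ε}^* Ω = λ(ε) Ω`)
for `μ` in the open set `Γ`. -/
structure IsConfFamily {d : ℕ} (F : ConfFamily d)
    (J : (Fin (d + d) → ℂ) → Matrix (Fin (d + d)) (Fin (d + d)) ℂ)
    (Γ : Set (Fin d → ℂ)) : Prop where
  analytic : AnalyticOn ℂ
    (fun p : (Fin d → ℂ) × ℂ × (Fin (d + d) → ℂ) => F.f p.1 p.2.1 p.2.2)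
    {p : (Fin d → ℂ) × ℂ × (Fin (d + d) → ℂ) | p.1 ∈ Γ}
  jac_x : ∀ μ ∈ Γ, ∀ (ε : ℂ) (x : Fin (d + d) → ℂ),
    hasJacobianAt (F.f μ ε) (F.Df μ ε x) x
  jac_mu : ∀ μ ∈ Γ, ∀ (ε : ℂ) (x : Fin (d + d) → ℂ),
    HasFDerivAt (fun μ' => F.f μ' ε x)
      (LinearMap.toContinuousLinearMap (Matrix.mulVecLin (F.Dmuf μ ε x))) μ
  conf : ∀ μ ∈ Γ, ∀ (ε : ℂ) (x : Fin (d + d) → ℂ),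
    (F.Df μ ε x)ᵀ * J (F.f μ ε x) * F.Df μ ε x = F.lam ε • J x
  periodic : ∀ μ ∈ Γ, ∀ ε : ℂ, PhasePeriodic (F.f μ ε)

/-- Hypothesis Hλ: the conformal factor is analytic near `0`, `λ(0)=1` and
`λ(ε) − 1 = α ε^a + O(|ε|^{a+1})` with `a ≥ 1` an integer and `α ≠ 0`. -/
def Hlambda (lam : ℂ → ℂ) (a : ℕ) (α : ℂ) : Prop :=
  AnalyticAt ℂ lam 0 ∧ lam 0 = 1 ∧ 1 ≤ a ∧ α ≠ 0 ∧
    (fun ε => lam ε - 1 - α * ε ^ a) =O[nhds (0 : ℂ)] fun ε => ε ^ (a + 1)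

/-! ### The sets Λ, Υ, G -/

/-- `Λ(A; ω, τ, N) = {λ ∈ ℂ : ν(λ;ω,τ) |λ−1|^{N+1} ≤ A}`. -/
def LambdaSet {d : ℕ} (ω : Fin d → ℝ) (τ : ℝ) (N : ℕ) (A : ℝ) : Set ℂ :=
  {lam | nuC ω τ lam * ENNReal.ofReal (‖lam - 1‖ ^ (N + 1)) ≤ ENNReal.ofReal A}

/-- `Υ(A; ω, τ) = {λ ∈ ℂ : ν(λ;ω,τ) ≤ A}`. -/
def Upsilon {d : ℕ} (ω : Fin d → ℝ) (τ : ℝ) (A : ℝ) : Set ℂ :=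
  {lam | nuC ω τ lam ≤ ENNReal.ofReal A}

/-- `G(A; ω, τ, N) = {ε ∈ ℂ : ν(λ(ε);ω,τ) |λ(ε)−1|^{N+1} ≤ A}`. -/
def Gset {d : ℕ} (lam : ℂ → ℂ) (ω : Fin d → ℝ) (τ : ℝ) (N : ℕ) (A : ℝ) : Set ℂ :=
  {ε | nuC ω τ (lam ε) * ENNReal.ofReal (‖lam ε - 1‖ ^ (N + 1)) ≤ ENNReal.ofReal A}

/-- `G_{r₀}(A; ω, τ, N) = G(A; ω, τ, N) ∩ {|ε| ≤ r₀}`. -/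
def GsetR {d : ℕ} (lam : ℂ → ℂ) (ω : Fin d → ℝ) (τ : ℝ) (N : ℕ) (A r0 : ℝ) : Set ℂ :=
  Gset lam ω τ N A ∩ Metric.closedBall 0 r0

/-- `z0` is `m`-tangentially accessible from both sides in the set `C`. -/
def TangAccessBoth (C : Set ℂ) (m : ℕ) (z0 : ℂ) : Prop :=
  ∃ u : ℂ, ‖u‖ = 1 ∧ ∃ δ > (0 : ℝ), ∃ γ > (0 : ℝ),
    ∀ t s : ℝ, |t| < δ → |s| < δ → γ * |t| ^ m ≤ |s| →
      z0 + (t : ℂ) * u + (s : ℂ) * (starRingEnd ℂ) u ∈ C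

/-! ### Whitney differentiability -/

/-- `C^p`-Whitney differentiability of `h : D → E` (`D ⊆ ℂ`), with respect to a given
"norm" `nrm` on `E`, with (complex, one-dimensional) Whitney derivatives of order `≤ ℓ`,
`ℓ < p ≤ ℓ + 1`. -/
def WhitneyCp {E : Type*} [AddCommGroup E] [Module ℂ E] (nrm : E → ℝ)
    (D : Set ℂ) (h : ℂ → E) (ℓ : ℕ) (p : ℝ) : Prop :=
  ∃ M : ℝ, ∃ H : ℕ → ℂ → E,
    (∀ x ∈ D, H 0 x = h x) ∧
    (∀ k ≤ ℓ, ∀ x ∈ D, nrm (H k x) ≤ M) ∧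
    (∀ k ≤ ℓ, ∀ x ∈ D, ∀ ε > (0 : ℝ), ∃ δ > (0 : ℝ), ∀ y ∈ D, ‖y - x‖ < δ →
      nrm (H k y - H k x) < ε) ∧
    ∀ k ≤ ℓ, ∀ x ∈ D, ∀ y ∈ D,
      nrm (H k y - ∑ j ∈ Finset.range (ℓ - k + 1),
          ((j.factorial : ℂ)⁻¹ * (y - x) ^ j) • H (j + k) x)
        ≤ M * ‖y - x‖ ^ (p - k)

/-- `C^∞`-Whitney differentiability. -/
def WhitneyCinf {E : Type*} [AddCommGroup E] [Module ℂ E] (nrm : E → ℝ)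
    (D : Set ℂ) (h : ℂ → E) : Prop :=
  ∀ (ℓ : ℕ) (p : ℝ), (ℓ : ℝ) < p → p ≤ ℓ + 1 → WhitneyCp nrm D h ℓ p

/-! ### The standing hypotheses of the main theorem (maps) -/

/-- The data of the main theorem: a Diophantine frequency, an exact symplectic
structure, an analytic family of conformally symplectic maps with conformal factor
`λ(ε) = 1 + α ε^a + O(ε^{a+1})`, and a Lagrangian invariant torus `K0` for the
symplectic map `f_{μ0,0}`. -/
structure MainSetup (d : ℕ) where
  τ : ℝ
  ρ : ℝ
  ω : Fin d → ℝ
  J : (Fin (d + d) → ℂ) → Matrix (Fin (d + d)) (Fin (d + d)) ℂ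
  F : ConfFamily d
  Γ : Set (Fin d → ℂ)
  a : ℕ
  α : ℂ
  μ0 : Fin d → ℂ
  K0 : (Fin d → ℂ) → Fin (d + d) → ℂ
  DK0 : (Fin d → ℂ) → Matrix (Fin (d + d)) (Fin d) ℂ

/-- The hypotheses of the main theorem. -/
structure MainHyps {d : ℕ} (S : MainSetup d) : Prop where
  hd : 0 < d
  hτ : 0 < S.τ
  hρ : 0 < S.ρ
  hdio : IsDiophantine S.ω S.τ
  hJ : SympForm S.J
  hΓopen : IsOpen S.Γ
  hμ0 : S.μ0 ∈ S.Γ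
  hF : IsConfFamily S.F S.J S.Γ
  hlam : Hlambda S.F.lam S.a S.α
  hK0A : MemA S.ρ S.K0
  hK0per : QuasiPeriodic S.K0
  hDK0 : ∀ θ ∈ StripO d S.ρ, hasJacobianAt S.K0 (S.DK0 θ) θ
  hLag : ∀ θ ∈ StripO d S.ρ, (S.DK0 θ)ᵀ * S.J (S.K0 θ) * S.DK0 θ = 0
  hinv : ∀ θ ∈ Strip d S.ρ, S.F.f S.μ0 0 (S.K0 θ) = S.K0 (shift S.ω θ)
  hHND : HNDat 1 S.ω
    (SmatC 1 S.ω S.J S.K0 S.DK0 fun θ => S.F.Df S.μ0 0 (S.K0 θ))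
    (fun θ => rowsFst (AtildeC S.ω S.J S.K0 S.DK0 (fun θ' => S.F.Dmuf S.μ0 0 (S.K0 θ')) θ))
    (fun θ => rowsSnd (AtildeC S.ω S.J S.K0 S.DK0 (fun θ' => S.F.Dmuf S.μ0 0 (S.K0 θ')) θ))

end KAM
namespace KAM

/-! ### Auxiliary lemmas for statement 15 -/

section Stmt15Aux

open Finset

private lemma intSign_mem (a : ℤ) : a.sign = -1 ∨ a.sign = 0 ∨ a.sign = 1 := by
  rcases a with (_ | n) | n
  · exact Or.inr (Or.inl rfl)
  · exact Or.inr (Or.inr rfl)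
  · exact Or.inl rfl

/-- The ℓ¹ norm of an integer vector, as a natural number. -/
private def natNorm {d : ℕ} (k : Fin d → ℤ) : ℕ := ∑ j, (k j).natAbs

private lemma intNorm_eq_natNorm {d : ℕ} (k : Fin d → ℤ) :
    intNorm k = (natNorm k : ℝ) := by
  unfold intNorm natNorm
  push_cast [Nat.cast_natAbs]
  rfl

private lemma one_le_natNorm {d : ℕ} {k : Fin d → ℤ} (hk : k ≠ 0) : 1 ≤ natNorm k := by
  by_contra h
  push_neg at h
  have h0 : natNorm k = 0 := by omega
  refine hk (funext fun j => ?_)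
  have hj : (k j).natAbs = 0 := by
    have := Finset.sum_eq_zero_iff.mp h0 j (Finset.mem_univ j)
    exact this
  exact Int.natAbs_eq_zero.mp hj

/-- The shell `{k : |k|₁ = n}` as a finset. -/
private def shellFinset (d n : ℕ) : Finset (Fin d → ℤ) :=
  (Fintype.piFinset fun _ : Fin d => Finset.Icc (-(n : ℤ)) (n : ℤ)).filter
    fun k => natNorm k = n

private lemma mem_shellFinset {d : ℕ} {k : Fin d → ℤ} {n : ℕ} (h : natNorm k = n) :
    k ∈ shellFinset d n := by
  refine Finset.mem_filter.mpr ⟨Fintype.mem_piFinset.mpr fun j => ?_, h⟩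
  have hle : (k j).natAbs ≤ n := by
    rw [← h]
    exact Finset.single_le_sum (f := fun j => (k j).natAbs)
      (fun _ _ => Nat.zero_le _) (Finset.mem_univ j)
  rw [Finset.mem_Icc]
  omega

private lemma card_shellFinset {m n : ℕ} (hn : 1 ≤ n) :
    ((shellFinset (m + 1) n).card : ℝ) ≤ 3 ^ (m + 1) * (n : ℝ) ^ m := by
  have h1 : (shellFinset (m + 1) n).card ≤
      ((Fintype.piFinset fun _ : Fin m => Finset.Icc (-(n : ℤ)) (n : ℤ)) ×ˢ
        ({-1, 0, 1} : Finset ℤ)).card := by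
    apply Finset.card_le_card_of_injOn
      (fun k => (fun j : Fin m => k j.castSucc, Int.sign (k (Fin.last m))))
    · intro k hk
      refine Finset.mem_product.mpr ⟨Fintype.mem_piFinset.mpr fun j => ?_, ?_⟩
      · exact Fintype.mem_piFinset.mp (Finset.mem_filter.mp hk).1 _
      · rcases intSign_mem (k (Fin.last m)) with h | h | h <;> simp [h]
    · intro k hk k' hk' heq
      obtain ⟨-, hsum⟩ := Finset.mem_filter.mp hk
      obtain ⟨-, hsum'⟩ := Finset.mem_filter.mp hk'
      have hfst : ∀ j : Fin m, k j.castSucc = k' j.castSucc :=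
        fun j => congrFun (congrArg Prod.fst heq) j
      have hsgn : Int.sign (k (Fin.last m)) = Int.sign (k' (Fin.last m)) :=
        congrArg Prod.snd heq
      have hsum2 : ∑ j : Fin m, (k j.castSucc).natAbs + (k (Fin.last m)).natAbs = n := by
        rw [← hsum]
        unfold natNorm
        rw [Fin.sum_univ_castSucc]
      have hsum2' : ∑ j : Fin m, (k' j.castSucc).natAbs + (k' (Fin.last m)).natAbs = n := by
        rw [← hsum']
        unfold natNorm
        rw [Fin.sum_univ_castSucc]
      have hfsteq : ∑ j : Fin m, (k j.castSucc).natAbs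
          = ∑ j : Fin m, (k' j.castSucc).natAbs :=
        Finset.sum_congr rfl fun j _ => by rw [hfst j]
      have habs : (k (Fin.last m)).natAbs = (k' (Fin.last m)).natAbs := by omega
      have hlast : k (Fin.last m) = k' (Fin.last m) := by
        have e1 := Int.sign_mul_abs (k (Fin.last m))
        have e2 := Int.sign_mul_abs (k' (Fin.last m))
        rw [Int.abs_eq_natAbs] at e1 e2
        rw [← e1, ← e2, hsgn, habs]
      funext j
      induction j using Fin.lastCases with
      | last => exact hlast
      | cast j => exact hfst j
  have h2 : (((Fintype.piFinset fun _ : Fin m => Finset.Icc (-(n : ℤ)) (n : ℤ)) ×ˢ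
      ({-1, 0, 1} : Finset ℤ)).card : ℝ) = ((2 * n + 1 : ℕ) : ℝ) ^ m * 3 := by
    rw [Finset.card_product, Fintype.card_piFinset_const]
    have hIcc : (Finset.Icc (-(n : ℤ)) (n : ℤ)).card = 2 * n + 1 := by
      rw [Int.card_Icc]
      omega
    have h3 : ({-1, 0, 1} : Finset ℤ).card = 3 := by decide
    rw [hIcc, h3]
    push_cast
    ring
  calc ((shellFinset (m + 1) n).card : ℝ)
      ≤ ((2 * n + 1 : ℕ) : ℝ) ^ m * 3 := by
        rw [← h2]; exact_mod_cast h1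
    _ ≤ (3 * (n : ℝ)) ^ m * 3 := by
        have h3 : ((2 * n + 1 : ℕ) : ℝ) ≤ 3 * (n : ℝ) := by
          have h4 : (2 * n + 1) ≤ 3 * n := by omega
          calc ((2 * n + 1 : ℕ) : ℝ) ≤ ((3 * n : ℕ) : ℝ) := by exact_mod_cast h4
            _ = 3 * (n : ℝ) := by push_cast; ring
        exact mul_le_mul_of_nonneg_right (pow_le_pow_left₀ (by positivity) h3 m) (by norm_num)
    _ = 3 ^ (m + 1) * (n : ℝ) ^ m := by rw [mul_pow]; ring

private lemma nuC_term_le {d : ℕ} (ω : Fin d → ℝ) (τ : ℝ) (lam : ℂ) {k : Fin d → ℤ}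
    (hk : k ≠ 0) :
    (ENNReal.ofReal ‖eDot k ω - lam‖)⁻¹ * ENNReal.ofReal (intNorm k) ^ (-τ)
      ≤ nuC ω τ lam :=
  le_iSup (fun k : {k : Fin d → ℤ // k ≠ 0} =>
    (ENNReal.ofReal ‖eDot k.1 ω - lam‖)⁻¹ * ENNReal.ofReal (intNorm k.1) ^ (-τ)) ⟨k, hk⟩

private lemma intNorm_pos {d : ℕ} {k : Fin d → ℤ} (hk : k ≠ 0) : (0 : ℝ) < intNorm k := by
  rw [intNorm_eq_natNorm]
  exact_mod_cast one_le_natNorm hk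

private lemma nuOmega_toReal_pos {d : ℕ} (hd : 0 < d) (ω : Fin d → ℝ) {τ : ℝ}
    (hdio : IsDiophantine ω τ) : 0 < (nuOmega ω τ).toReal := by
  refine ENNReal.toReal_pos (fun h0 => ?_) hdio
  set k : Fin d → ℤ := fun _ => 1 with hkdef
  have hk0 : k ≠ 0 := by
    intro h
    have := congrFun h ⟨0, hd⟩
    simp [hkdef] at this
  have hle := nuC_term_le ω τ 1 hk0
  rw [show nuC ω τ 1 = nuOmega ω τ from rfl, h0, nonpos_iff_eq_zero] at hle
  have hpos : 0 < (ENNReal.ofReal ‖eDot k ω - (1 : ℂ)‖)⁻¹ *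
      ENNReal.ofReal (intNorm k) ^ (-τ) := by
    apply ENNReal.mul_pos
    · exact (ENNReal.inv_ne_zero).mpr ENNReal.ofReal_ne_top
    · exact (ENNReal.rpow_pos (ENNReal.ofReal_pos.mpr (intNorm_pos hk0))
        ENNReal.ofReal_ne_top).ne'
  exact hpos.ne' hle

private lemma dio_lb {d : ℕ} {ω : Fin d → ℝ} {τ : ℝ} (hdio : IsDiophantine ω τ)
    {k : Fin d → ℤ} (hk : k ≠ 0) :
    intNorm k ^ (-τ) ≤ (nuOmega ω τ).toReal * ‖eDot k ω - 1‖ := by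
  have hle := nuC_term_le ω τ 1 hk
  rw [show nuC ω τ 1 = nuOmega ω τ from rfl] at hle
  have hn : (0 : ℝ) < intNorm k := intNorm_pos hk
  by_cases he : ‖eDot k ω - 1‖ = 0
  · exfalso
    rw [he] at hle
    rw [ENNReal.ofReal_zero, ENNReal.inv_zero] at hle
    have hne : ENNReal.ofReal (intNorm k) ^ (-τ) ≠ 0 :=
      (ENNReal.rpow_pos (ENNReal.ofReal_pos.mpr hn) ENNReal.ofReal_ne_top).ne'
    rw [ENNReal.top_mul hne] at hle
    exact hdio (top_le_iff.mp hle)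
  · have hepos : 0 < ‖eDot k ω - 1‖ := lt_of_le_of_ne (norm_nonneg _) (Ne.symm he)
    rw [← ENNReal.ofReal_inv_of_pos hepos, ENNReal.ofReal_rpow_of_pos hn,
      ← ENNReal.ofReal_mul (by positivity), ← ENNReal.ofReal_toReal hdio] at hle
    have hreal := (ENNReal.ofReal_le_ofReal_iff ENNReal.toReal_nonneg).mp hle
    calc intNorm k ^ (-τ)
        = ‖eDot k ω - 1‖⁻¹ * intNorm k ^ (-τ) * ‖eDot k ω - 1‖ := by
          rw [show ‖eDot k ω - 1‖⁻¹ * intNorm k ^ (-τ) * ‖eDot k ω - 1‖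
              = (‖eDot k ω - 1‖ * ‖eDot k ω - 1‖⁻¹) * intNorm k ^ (-τ) by ring,
            mul_inv_cancel₀ hepos.ne', one_mul]
      _ ≤ (nuOmega ω τ).toReal * ‖eDot k ω - 1‖ :=
          mul_le_mul_of_nonneg_right hreal (norm_nonneg _)

private lemma exists_witness {d : ℕ} (ω : Fin d → ℝ) (τ : ℝ) (N : ℕ) {A : ℝ} (hA : 0 < A)
    {lam : ℂ} (hl : 0 < ‖lam - 1‖) (h : lam ∉ LambdaSet ω τ N A) :
    ∃ k : Fin d → ℤ, k ≠ 0 ∧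
      ‖eDot k ω - lam‖ < A⁻¹ * ‖lam - 1‖ ^ (N + 1) * intNorm k ^ (-τ) := by
  simp only [LambdaSet, Set.mem_setOf_eq, not_le] at h
  have hP : (0 : ℝ) < ‖lam - 1‖ ^ (N + 1) := pow_pos hl _
  have hdiv : ENNReal.ofReal (A / ‖lam - 1‖ ^ (N + 1)) < nuC ω τ lam := by
    rw [ENNReal.ofReal_div_of_pos hP,
      ENNReal.div_lt_iff (Or.inl (ENNReal.ofReal_pos.mpr hP).ne')
        (Or.inl ENNReal.ofReal_ne_top)]
    exact h
  rw [nuC, lt_iSup_iff] at hdiv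
  obtain ⟨⟨k, hk⟩, hklt⟩ := hdiv
  refine ⟨k, hk, ?_⟩
  have hn : (0 : ℝ) < intNorm k := intNorm_pos hk
  rw [ENNReal.ofReal_rpow_of_pos hn] at hklt
  by_cases he : ‖eDot k ω - lam‖ = 0
  · rw [he]; positivity
  · have hepos : 0 < ‖eDot k ω - lam‖ := lt_of_le_of_ne (norm_nonneg _) (Ne.symm he)
    rw [← ENNReal.ofReal_inv_of_pos hepos, ← ENNReal.ofReal_mul (by positivity)] at hklt
    have hreal := (ENNReal.ofReal_lt_ofReal_iff (by positivity)).mp hklt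
    have h2 : ‖eDot k ω - lam‖ * A < ‖lam - 1‖ ^ (N + 1) * intNorm k ^ (-τ) := by
      rw [div_lt_iff₀ hP] at hreal
      calc ‖eDot k ω - lam‖ * A
          < ‖eDot k ω - lam‖ * (‖eDot k ω - lam‖⁻¹ * intNorm k ^ (-τ) * ‖lam - 1‖ ^ (N + 1)) :=
            mul_lt_mul_of_pos_left hreal hepos
        _ = ‖lam - 1‖ ^ (N + 1) * intNorm k ^ (-τ) := by
            rw [show ‖eDot k ω - lam‖ *
                (‖eDot k ω - lam‖⁻¹ * intNorm k ^ (-τ) * ‖lam - 1‖ ^ (N + 1))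
                = (‖eDot k ω - lam‖ * ‖eDot k ω - lam‖⁻¹) *
                  (intNorm k ^ (-τ) * ‖lam - 1‖ ^ (N + 1)) by ring,
              mul_inv_cancel₀ hepos.ne', one_mul]
            ring
    calc ‖eDot k ω - lam‖ = ‖eDot k ω - lam‖ * A * A⁻¹ := by field_simp
      _ < ‖lam - 1‖ ^ (N + 1) * intNorm k ^ (-τ) * A⁻¹ :=
          mul_lt_mul_of_pos_right h2 (inv_pos.mpr hA)
      _ = A⁻¹ * ‖lam - 1‖ ^ (N + 1) * intNorm k ^ (-τ) := by ring

private lemma rpow_tail_term_bound {δ : ℝ} (hδ : 0 < δ) {n : ℕ} (hn : 1 ≤ n) :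
    (n : ℝ) ^ (-(1 + δ)) ≤
      (2 / min δ 1) * ((n : ℝ) ^ (-δ) - ((n + 1 : ℕ) : ℝ) ^ (-δ)) := by
  have hmin : 0 < min δ 1 := lt_min hδ one_pos
  have hx : (1 : ℝ) ≤ (n : ℝ) := by exact_mod_cast hn
  have hx0 : (0 : ℝ) < (n : ℝ) := by linarith
  set x := (n : ℝ) with hxdef
  have hx1 : (0 : ℝ) < x + 1 := by linarith
  have hr0 : 0 < x / (x + 1) := by positivity
  have hr1 : x / (x + 1) ≤ 1 := by rw [div_le_one hx1]; linarith
  have hfrac : 1 - x / (x + 1) = (x + 1)⁻¹ := by field_simp; ring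
  have key : min δ 1 * (x + 1)⁻¹ ≤ 1 - (x / (x + 1)) ^ δ := by
    rw [← hfrac]
    rcases le_total 1 δ with h | h
    · rw [min_eq_right h]
      have hle : (x / (x + 1)) ^ δ ≤ (x / (x + 1)) ^ (1 : ℝ) :=
        Real.rpow_le_rpow_of_exponent_ge hr0 hr1 h
      rw [Real.rpow_one] at hle
      linarith
    · rw [min_eq_left h]
      have hs : (-1 : ℝ) ≤ x / (x + 1) - 1 := by linarith
      have hber := rpow_one_add_le_one_add_mul_self hs hδ.le h
      rw [add_sub_cancel] at hber
      nlinarith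
  have hsplit : (x + 1) ^ (-δ) = x ^ (-δ) * (x / (x + 1)) ^ δ := by
    rw [Real.div_rpow hx0.le hx1.le, Real.rpow_neg hx0.le, Real.rpow_neg hx1.le]
    have h1 : (x + 1) ^ δ ≠ 0 := by positivity
    have h2 : x ^ δ ≠ 0 := by positivity
    field_simp
  have hxpow : x ^ (-(1 + δ)) = x ^ (-δ) * x⁻¹ := by
    rw [show -(1 + δ) = -δ + -1 by ring, Real.rpow_add hx0, Real.rpow_neg_one]
  have hcast : ((n + 1 : ℕ) : ℝ) = x + 1 := by push_cast; rfl
  rw [hcast, hxpow, hsplit]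
  have ha : (0 : ℝ) < x ^ (-δ) := Real.rpow_pos_of_pos hx0 _
  calc x ^ (-δ) * x⁻¹ ≤ x ^ (-δ) * (2 * (x + 1)⁻¹) := by
        apply mul_le_mul_of_nonneg_left _ ha.le
        calc x⁻¹ = 1 / x := (one_div x).symm
          _ ≤ 2 / (x + 1) := by rw [div_le_div_iff₀ hx0 hx1]; nlinarith
          _ = 2 * (x + 1)⁻¹ := by ring
      _ = (2 / min δ 1) * (x ^ (-δ) * (min δ 1 * (x + 1)⁻¹)) := by
          field_simp
      _ ≤ (2 / min δ 1) * (x ^ (-δ) * (1 - (x / (x + 1)) ^ δ)) := by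
          apply mul_le_mul_of_nonneg_left _ (by positivity)
          exact mul_le_mul_of_nonneg_left key ha.le
      _ = (2 / min δ 1) * (x ^ (-δ) - x ^ (-δ) * (x / (x + 1)) ^ δ) := by ring

private lemma tsum_tail_le {δ : ℝ} (hδ : 0 < δ) {n0 : ℕ} (h1 : 1 ≤ n0) :
    (∑' n : ℕ, if n0 ≤ n then ENNReal.ofReal ((n : ℝ) ^ (-(1 + δ))) else 0)
      ≤ ENNReal.ofReal ((2 / min δ 1) * (n0 : ℝ) ^ (-δ)) := by
  have hmin : 0 < min δ 1 := lt_min hδ one_pos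
  rw [ENNReal.tsum_eq_iSup_sum]
  refine iSup_le fun s => ?_
  obtain ⟨M, hM⟩ : ∃ M, ∀ n ∈ s, n < M :=
    ⟨s.sup id + 1, fun n hn => Nat.lt_succ_of_le (Finset.le_sup (f := id) hn)⟩
  have hsub : s ⊆ Finset.range M := fun n hn => Finset.mem_range.mpr (hM n hn)
  calc ∑ n ∈ s, (if n0 ≤ n then ENNReal.ofReal ((n : ℝ) ^ (-(1 + δ))) else 0)
      ≤ ∑ n ∈ Finset.range M,
          (if n0 ≤ n then ENNReal.ofReal ((n : ℝ) ^ (-(1 + δ))) else 0) :=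
        Finset.sum_le_sum_of_subset hsub
    _ = ∑ n ∈ (Finset.range M).filter (fun n => n0 ≤ n),
          ENNReal.ofReal ((n : ℝ) ^ (-(1 + δ))) := (Finset.sum_filter _ _).symm
    _ = ∑ n ∈ Finset.Ico n0 M, ENNReal.ofReal ((n : ℝ) ^ (-(1 + δ))) := by
        congr 1
        ext a
        simp only [Finset.mem_filter, Finset.mem_range, Finset.mem_Ico]
        omega
    _ = ENNReal.ofReal (∑ n ∈ Finset.Ico n0 M, (n : ℝ) ^ (-(1 + δ))) :=
        (ENNReal.ofReal_sum_of_nonneg fun n _ => Real.rpow_nonneg (Nat.cast_nonneg n) _).symm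
    _ ≤ ENNReal.ofReal ((2 / min δ 1) * (n0 : ℝ) ^ (-δ)) := by
        apply ENNReal.ofReal_le_ofReal
        set f : ℕ → ℝ := fun n => (n : ℝ) ^ (-δ) with hf
        have hstep : ∀ n ∈ Finset.Ico n0 M,
            (n : ℝ) ^ (-(1 + δ)) ≤ (2 / min δ 1) * (f n - f (n + 1)) := by
          intro n hn
          have hn1 : 1 ≤ n := le_trans h1 (Finset.mem_Ico.mp hn).1
          exact rpow_tail_term_bound hδ hn1
        calc ∑ n ∈ Finset.Ico n0 M, (n : ℝ) ^ (-(1 + δ))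
            ≤ ∑ n ∈ Finset.Ico n0 M, (2 / min δ 1) * (f n - f (n + 1)) :=
              Finset.sum_le_sum hstep
          _ = (2 / min δ 1) * ∑ n ∈ Finset.Ico n0 M, (f n - f (n + 1)) := by
              rw [Finset.mul_sum]
          _ ≤ (2 / min δ 1) * f n0 := by
              apply mul_le_mul_of_nonneg_left _ (by positivity)
              rcases le_or_gt n0 M with hle | hlt
              · rw [Finset.sum_Ico_eq_sum_range]
                simp only [Nat.add_assoc]
                rw [Finset.sum_range_sub' (fun i => f (n0 + i))]
                have h0 : 0 ≤ f (n0 + (M - n0)) := Real.rpow_nonneg (Nat.cast_nonneg _) _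
                simp only [Nat.add_zero]
                linarith
              · rw [Finset.Ico_eq_empty (by omega)]
                simp only [Finset.sum_empty]
                exact Real.rpow_nonneg (Nat.cast_nonneg _) _

end Stmt15Aux

/-- if `ω` is Diophantine of class `τ` with `2τ > d`, `N ≥ 1` and
`A > 0`, then for all small `ρ` the two-dimensional Lebesgue measure of the
complement of `Λ(A;ω,τ,N)` in the annulus `ρ < |λ−1| < 2ρ` is at most
`C A^{-2} ρ^{2(N+1) + (2τ−d)/τ}`. -/
theorem statement15 {d : ℕ} (hd : 0 < d) (ω : Fin d → ℝ) (τ : ℝ) (hτ : 0 < τ)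
    (hdio : IsDiophantine ω τ) (N : ℕ) (hN : 1 ≤ N) (A : ℝ) (hA : 0 < A)
    (h2τ : (d : ℝ) < 2 * τ) :
    ∃ C > (0 : ℝ), ∃ ρ0 > (0 : ℝ), ∀ ρv : ℝ, 0 < ρv → ρv < ρ0 →
      volume {lam : ℂ | ρv < ‖lam - 1‖ ∧ ‖lam - 1‖ < 2 * ρv ∧ lam ∉ LambdaSet ω τ N A}
        ≤ ENNReal.ofReal
            (C * A ^ (-(2 : ℝ)) * ρv ^ (2 * ((N : ℝ) + 1) + (2 * τ - (d : ℝ)) / τ)) := by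
  obtain ⟨m, rfl⟩ : ∃ m, d = m + 1 := ⟨d - 1, by omega⟩
  set ν := (nuOmega ω τ).toReal with hνdef
  have hν : 0 < ν := nuOmega_toReal_pos hd ω hdio
  set δ : ℝ := 2 * τ - ((m + 1 : ℕ) : ℝ) with hδdef
  have hδ : 0 < δ := by
    rw [hδdef]
    linarith [h2τ]
  have hmin : 0 < min δ 1 := lt_min hδ one_pos
  have hNτ : ((m + 1 : ℕ) : ℝ) ≤ 2 * τ := by linarith [h2τ]
  refine ⟨2 ^ (2 * (N + 1)) * 3 ^ (m + 1) * 4 * (2 / min δ 1) * (3 * ν) ^ (δ / τ),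
    by positivity, min 1 ((A / 2 ^ (N + 1)) ^ ((1 : ℝ) / N)), by positivity, ?_⟩
  intro ρ hρ0 hρ1
  -- the basic smallness estimate `A⁻¹ (2ρ)^{N+1} ≤ ρ`
  have hρN : A⁻¹ * (2 * ρ) ^ (N + 1) ≤ ρ := by
    have h2 : ρ < (A / 2 ^ (N + 1)) ^ ((1 : ℝ) / N) :=
      lt_of_lt_of_le hρ1 (min_le_right _ _)
    have hNne : ((N : ℝ)) ≠ 0 := by
      have : (1 : ℝ) ≤ (N : ℝ) := by exact_mod_cast hN
      linarith
    have h3 : ρ ^ N ≤ A / 2 ^ (N + 1) := by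
      have h4 : ρ ^ (N : ℝ) ≤ ((A / 2 ^ (N + 1)) ^ ((1 : ℝ) / N)) ^ (N : ℝ) :=
        Real.rpow_le_rpow hρ0.le h2.le (Nat.cast_nonneg N)
      rw [← Real.rpow_natCast ρ N]
      calc ρ ^ (N : ℝ) ≤ ((A / 2 ^ (N + 1)) ^ ((1 : ℝ) / N)) ^ (N : ℝ) := h4
        _ = A / 2 ^ (N + 1) := by
            rw [← Real.rpow_mul (by positivity), one_div,
              inv_mul_cancel₀ hNne, Real.rpow_one]
    have h5 : 2 ^ (N + 1) * ρ ^ N ≤ A := by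
      rw [div_eq_mul_inv] at h3
      calc 2 ^ (N + 1) * ρ ^ N ≤ 2 ^ (N + 1) * (A * (2 ^ (N + 1) : ℝ)⁻¹) :=
            mul_le_mul_of_nonneg_left h3 (by positivity)
        _ = A := by field_simp
    rw [inv_mul_le_iff₀ hA, mul_pow]
    calc (2 : ℝ) ^ (N + 1) * ρ ^ (N + 1) = (2 ^ (N + 1) * ρ ^ N) * ρ := by ring
      _ ≤ A * ρ := mul_le_mul_of_nonneg_right h5 hρ0.le
  set B : ℝ := A⁻¹ * (2 * ρ) ^ (N + 1) with hBdef
  have hB : 0 < B := by positivity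
  set R : ℕ → ℝ := fun n => B * (n : ℝ) ^ (-τ) with hRdef
  set n0 : ℕ := ⌈(3 * ν * ρ) ^ (-(1 / τ))⌉₊ with hn0def
  have hx0 : (0 : ℝ) < (3 * ν * ρ) ^ (-(1 / τ)) := by positivity
  have hn01 : 1 ≤ n0 := Nat.one_le_ceil_iff.mpr hx0
  -- covering
  have hcover : {lam : ℂ | ρ < ‖lam - 1‖ ∧ ‖lam - 1‖ < 2 * ρ ∧ lam ∉ LambdaSet ω τ N A} ⊆
      ⋃ (n : ℕ), ⋃ (_ : n0 ≤ n), ⋃ k ∈ shellFinset (m + 1) n,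
        Metric.ball (eDot k ω) (R n) := by
    intro lam hlam
    obtain ⟨h1, h2, h3⟩ := hlam
    have hl1 : 0 < ‖lam - 1‖ := lt_trans hρ0 h1
    obtain ⟨k, hk0, hkb⟩ := exists_witness ω τ N hA hl1 h3
    set n := natNorm k with hndef
    have hn1 : 1 ≤ n := one_le_natNorm hk0
    have hnR : (0 : ℝ) < (n : ℝ) := by exact_mod_cast hn1
    have hτn : (n : ℝ) ^ (-τ) ≤ 1 :=
      Real.rpow_le_one_of_one_le_of_nonpos (by exact_mod_cast hn1) (by linarith)
    have hklt : ‖eDot k ω - lam‖ < R n := by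
      calc ‖eDot k ω - lam‖ < A⁻¹ * ‖lam - 1‖ ^ (N + 1) * intNorm k ^ (-τ) := hkb
        _ ≤ R n := by
            rw [hRdef, intNorm_eq_natNorm, ← hndef, hBdef]
            have hpl : ‖lam - 1‖ ^ (N + 1) ≤ (2 * ρ) ^ (N + 1) :=
              pow_le_pow_left₀ (norm_nonneg _) h2.le _
            have := mul_le_mul_of_nonneg_left hpl (inv_pos.mpr hA).le
            exact mul_le_mul_of_nonneg_right
              (by rw [mul_assoc] at *; exact mul_le_mul_of_nonneg_left hpl (by positivity))
              (by positivity)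
    have hRρ : R n ≤ ρ := by
      calc R n = B * (n : ℝ) ^ (-τ) := rfl
        _ ≤ B * 1 := mul_le_mul_of_nonneg_left hτn hB.le
        _ = B := mul_one B
        _ ≤ ρ := hρN
    have hball : lam ∈ Metric.ball (eDot k ω) (R n) := by
      rw [Metric.mem_ball, dist_eq_norm, norm_sub_rev]
      exact hklt
    have he1 : ‖eDot k ω - 1‖ < 3 * ρ := by
      have htri : ‖eDot k ω - 1‖ ≤ ‖eDot k ω - lam‖ + ‖lam - 1‖ := by
        have := dist_triangle (eDot k ω) lam 1
        simpa [dist_eq_norm] using this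
      linarith
    have hdi : (n : ℝ) ^ (-τ) ≤ ν * ‖eDot k ω - 1‖ := by
      have := dio_lb hdio hk0
      rwa [intNorm_eq_natNorm, ← hndef] at this
    have hlt : (n : ℝ) ^ (-τ) < 3 * ν * ρ := by
      calc (n : ℝ) ^ (-τ) ≤ ν * ‖eDot k ω - 1‖ := hdi
        _ < ν * (3 * ρ) := mul_lt_mul_of_pos_left he1 hν
        _ = 3 * ν * ρ := by ring
    have hn0n : n0 ≤ n := by
      rw [hn0def, Nat.ceil_le]
      have h5 : (3 * ν * ρ) ^ (-(1 / τ)) < ((n : ℝ) ^ (-τ)) ^ (-(1 / τ)) :=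
        Real.rpow_lt_rpow_of_neg (by positivity) hlt
          (by rw [neg_lt, neg_zero]; positivity)
      have h6 : ((n : ℝ) ^ (-τ)) ^ (-(1 / τ)) = (n : ℝ) := by
        rw [← Real.rpow_mul hnR.le,
          show (-τ) * (-(1 / τ)) = 1 by field_simp, Real.rpow_one]
      rw [h6] at h5
      exact h5.le
    refine Set.mem_iUnion.mpr ⟨n, Set.mem_iUnion.mpr ⟨hn0n, Set.mem_iUnion.mpr
      ⟨k, Set.mem_iUnion.mpr ⟨mem_shellFinset rfl, hball⟩⟩⟩⟩
  -- per-shell constant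
  set c1 : ℝ := 4 * 3 ^ (m + 1) * B ^ 2 with hc1def
  have hc1 : 0 < c1 := by positivity
  have hπ : (NNReal.pi : ℝ≥0∞) ≤ ENNReal.ofReal 4 := by
    rw [← ENNReal.ofReal_coe_nnreal, NNReal.coe_real_pi]
    exact ENNReal.ofReal_le_ofReal Real.pi_le_four
  -- per-shell bound
  have hshell : ∀ n : ℕ,
      volume (⋃ (_ : n0 ≤ n), ⋃ k ∈ shellFinset (m + 1) n, Metric.ball (eDot k ω) (R n))
        ≤ if n0 ≤ n then ENNReal.ofReal c1 * ENNReal.ofReal ((n : ℝ) ^ (-(1 + δ))) else 0 := by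
    intro n
    by_cases hn : n0 ≤ n
    · simp only [hn, if_true, Set.iUnion_true]
      have hn1 : 1 ≤ n := le_trans hn01 hn
      have hnR : (0 : ℝ) < (n : ℝ) := by exact_mod_cast hn1
      have hRnn : 0 ≤ R n := by
        rw [hRdef]; positivity
      calc volume (⋃ k ∈ shellFinset (m + 1) n, Metric.ball (eDot k ω) (R n))
          ≤ ∑ k ∈ shellFinset (m + 1) n, volume (Metric.ball (eDot k ω) (R n)) :=
            measure_biUnion_finset_le _ _
        _ = ∑ _k ∈ shellFinset (m + 1) n, ENNReal.ofReal (R n) ^ 2 * NNReal.pi := by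
            refine Finset.sum_congr rfl fun k _ => Complex.volume_ball _ _
        _ = ((shellFinset (m + 1) n).card : ℝ≥0∞) *
              (ENNReal.ofReal (R n) ^ 2 * NNReal.pi) := by
            rw [Finset.sum_const, nsmul_eq_mul]
        _ ≤ ((shellFinset (m + 1) n).card : ℝ≥0∞) *
              (ENNReal.ofReal (R n) ^ 2 * ENNReal.ofReal 4) := by
            exact mul_le_mul_right (mul_le_mul_right hπ _) _
        _ = ENNReal.ofReal (((shellFinset (m + 1) n).card : ℝ) * (R n ^ 2 * 4)) := by
            rw [← ENNReal.ofReal_pow hRnn, ← ENNReal.ofReal_mul (by positivity),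
              ← ENNReal.ofReal_natCast, ← ENNReal.ofReal_mul (by positivity)]
        _ ≤ ENNReal.ofReal c1 * ENNReal.ofReal ((n : ℝ) ^ (-(1 + δ))) := by
            rw [← ENNReal.ofReal_mul hc1.le]
            apply ENNReal.ofReal_le_ofReal
            have hcard := card_shellFinset (m := m) hn1
            have hr2 : R n ^ 2 = B ^ 2 * (n : ℝ) ^ (-(2 * τ)) := by
              rw [hRdef]
              rw [mul_pow, ← Real.rpow_natCast ((n : ℝ) ^ (-τ)) 2,
                ← Real.rpow_mul hnR.le]
              congr 1
              push_cast
              ring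
            have hmerge : (n : ℝ) ^ m * (n : ℝ) ^ (-(2 * τ)) = (n : ℝ) ^ (-(1 + δ)) := by
              rw [← Real.rpow_natCast (n : ℝ) m, ← Real.rpow_add hnR]
              congr 1
              rw [hδdef]
              push_cast
              ring
            calc ((shellFinset (m + 1) n).card : ℝ) * (R n ^ 2 * 4)
                ≤ 3 ^ (m + 1) * (n : ℝ) ^ m * (R n ^ 2 * 4) := by
                  apply mul_le_mul_of_nonneg_right hcard
                  positivity
              _ = c1 * ((n : ℝ) ^ m * (n : ℝ) ^ (-(2 * τ))) := by
                  rw [hr2, hc1def]; ring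
              _ = c1 * (n : ℝ) ^ (-(1 + δ)) := by rw [hmerge]
    · simp [hn]
  -- the final real-number estimate
  have hn0b : (n0 : ℝ) ^ (-δ) ≤ (3 * ν) ^ (δ / τ) * ρ ^ (δ / τ) := by
    have hle : (3 * ν * ρ) ^ (-(1 / τ)) ≤ (n0 : ℝ) := Nat.le_ceil _
    have h7 : (n0 : ℝ) ^ (-δ) ≤ ((3 * ν * ρ) ^ (-(1 / τ))) ^ (-δ) :=
      Real.rpow_le_rpow_of_nonpos hx0 hle (by linarith)
    have h8 : ((3 * ν * ρ) ^ (-(1 / τ))) ^ (-δ) = (3 * ν * ρ) ^ (δ / τ) := by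
      rw [← Real.rpow_mul (by positivity)]
      congr 1
      field_simp
    have h9 : (3 * ν * ρ) ^ (δ / τ) = (3 * ν) ^ (δ / τ) * ρ ^ (δ / τ) :=
      Real.mul_rpow (by positivity) hρ0.le
    rw [h8, h9] at h7
    exact h7
  have hfinal : c1 * ((2 / min δ 1) * (n0 : ℝ) ^ (-δ))
      ≤ 2 ^ (2 * (N + 1)) * 3 ^ (m + 1) * 4 * (2 / min δ 1) * (3 * ν) ^ (δ / τ) *
        A ^ (-(2 : ℝ)) * ρ ^ (2 * ((N : ℝ) + 1) + (2 * τ - ((m + 1 : ℕ) : ℝ)) / τ) := by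
    have hA2 : A ^ (-(2 : ℝ)) = (A⁻¹) ^ 2 := by
      rw [show (-(2 : ℝ)) = -((2 : ℕ) : ℝ) by norm_num, Real.rpow_neg hA.le,
        Real.rpow_natCast, inv_pow]
    have hE : ρ ^ (2 * ((N : ℝ) + 1) + (2 * τ - ((m + 1 : ℕ) : ℝ)) / τ)
        = ρ ^ (2 * (N + 1)) * ρ ^ (δ / τ) := by
      rw [Real.rpow_add hρ0, hδdef]
      congr 1
      rw [show (2 * ((N : ℝ) + 1)) = ((2 * (N + 1) : ℕ) : ℝ) by push_cast; ring,
        Real.rpow_natCast]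
    rw [hA2, hE, hc1def, hBdef]
    have hP0 : (0 : ℝ) ≤ 4 * 3 ^ (m + 1) * (A⁻¹ * (2 * ρ) ^ (N + 1)) ^ 2 * (2 / min δ 1) := by
      positivity
    calc 4 * 3 ^ (m + 1) * (A⁻¹ * (2 * ρ) ^ (N + 1)) ^ 2 *
          ((2 / min δ 1) * (n0 : ℝ) ^ (-δ))
        = (4 * 3 ^ (m + 1) * (A⁻¹ * (2 * ρ) ^ (N + 1)) ^ 2 * (2 / min δ 1)) *
            (n0 : ℝ) ^ (-δ) := by ring
      _ ≤ (4 * 3 ^ (m + 1) * (A⁻¹ * (2 * ρ) ^ (N + 1)) ^ 2 * (2 / min δ 1)) *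
            ((3 * ν) ^ (δ / τ) * ρ ^ (δ / τ)) := mul_le_mul_of_nonneg_left hn0b hP0
      _ = 2 ^ (2 * (N + 1)) * 3 ^ (m + 1) * 4 * (2 / min δ 1) * (3 * ν) ^ (δ / τ) *
            (A⁻¹) ^ 2 * (ρ ^ (2 * (N + 1)) * ρ ^ (δ / τ)) := by
          ring
  -- putting everything together
  calc volume {lam : ℂ | ρ < ‖lam - 1‖ ∧ ‖lam - 1‖ < 2 * ρ ∧ lam ∉ LambdaSet ω τ N A}
      ≤ volume (⋃ (n : ℕ), ⋃ (_ : n0 ≤ n), ⋃ k ∈ shellFinset (m + 1) n,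
          Metric.ball (eDot k ω) (R n)) := measure_mono hcover
    _ ≤ ∑' n : ℕ, volume (⋃ (_ : n0 ≤ n), ⋃ k ∈ shellFinset (m + 1) n,
          Metric.ball (eDot k ω) (R n)) := measure_iUnion_le _
    _ ≤ ∑' n : ℕ, (if n0 ≤ n then
          ENNReal.ofReal c1 * ENNReal.ofReal ((n : ℝ) ^ (-(1 + δ))) else 0) :=
        ENNReal.tsum_le_tsum hshell
    _ = ENNReal.ofReal c1 * ∑' n : ℕ,
          (if n0 ≤ n then ENNReal.ofReal ((n : ℝ) ^ (-(1 + δ))) else 0) := by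
        rw [← ENNReal.tsum_mul_left]
        exact tsum_congr fun n => by split <;> simp
    _ ≤ ENNReal.ofReal c1 * ENNReal.ofReal ((2 / min δ 1) * (n0 : ℝ) ^ (-δ)) :=
        mul_le_mul_right (tsum_tail_le hδ hn01) _
    _ = ENNReal.ofReal (c1 * ((2 / min δ 1) * (n0 : ℝ) ^ (-δ))) :=
        (ENNReal.ofReal_mul hc1.le).symm
    _ ≤ ENNReal.ofReal
          (2 ^ (2 * (N + 1)) * 3 ^ (m + 1) * 4 * (2 / min δ 1) * (3 * ν) ^ (δ / τ) *
            A ^ (-(2 : ℝ)) * ρ ^ (2 * ((N : ℝ) + 1) + (2 * τ - ((m + 1 : ℕ) : ℝ)) / τ)) :=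
        ENNReal.ofReal_le_ofReal hfinal

end KAM
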